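/- Let n ≥ 1, k ≥ 1, S = {A_1,…,A_n}, and let π* be the probability distribution on rankings of S assigning probability 1/n to each of the n cyclic rankings (A_i, A_{i+1}, …, A_n, A_1, …, A_{i-1}), i = 1,…,n, and 0 to all other rankings. If 2k-1 voters independently sample rankings from π*, the probability that a Condorcet winner exists equals n^{-(2k-2)} · ∑_{ℓ=0}^{k-1} C(2k-1, ℓ)(n-1)^ℓ. -/

import Mathlib

open Finset

/-- Position of alternative `j` in the cyclic ranking starting at alternative `i`
(position `0` is the top-ranked alternative). -/
def cpos (n : ℕ) (i j : Fin n) : ℕ := ((j : ℕ) + n - (i : ℕ)) % n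

/-- `A_j` is a Condorcet winner for the profile of cyclic rankings indexed by
`v : Fin (2k-1) → Fin n` (voter `i` uses the cyclic ranking starting at `A_{v i}`). -/
def CondorcetWinnerCyc (n k : ℕ) (v : Fin (2*k-1) → Fin n) (j : Fin n) : Prop :=
  ∀ b : Fin n, b ≠ j → k ≤ (univ.filter (fun i => cpos n (v i) j < cpos n (v i) b)).card

lemma cposmod (n a j : ℕ) (ha : a < n) (hj : j < n) :
    (j + n - a) % n = if a ≤ j then j - a else j + n - a := by
  split
  · have h : j + n - a = n + (j - a) := by omega
    rw [h, Nat.add_mod_left]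
    exact Nat.mod_eq_of_lt (by omega)
  · exact Nat.mod_eq_of_lt (by omega)

lemma condorcet_iff (n k : ℕ) (hn : 1 ≤ n) (v : Fin (2*k-1) → Fin n) (j : Fin n) :
    CondorcetWinnerCyc n k v j ↔ k ≤ (univ.filter (fun i => v i = j)).card := by
  classical
  rcases eq_or_lt_of_le hn with h1 | h2
  · -- n = 1
    have hn1 : n = 1 := h1.symm
    subst hn1
    have hall : ∀ x y : Fin 1, x = y := fun x y => Fin.ext (by
      have := x.isLt; have := y.isLt; omega)
    constructor
    · intro _
      have : (univ.filter (fun i => v i = j)) = univ :=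
        filter_true_of_mem (fun i _ => hall _ _)
      rw [this, card_univ, Fintype.card_fin]
      omega
    · intro _ b hb
      exact absurd (hall b j) hb
  · -- n ≥ 2
    obtain ⟨b, hbv⟩ : ∃ b : Fin n, (b : ℕ) = if (j:ℕ) = 0 then n - 1 else (j:ℕ) - 1 :=
      ⟨⟨if (j:ℕ) = 0 then n - 1 else (j:ℕ) - 1, by split <;> omega⟩, rfl⟩
    have hjlt := j.isLt
    have hbj : b ≠ j := by
      have : (b:ℕ) ≠ (j:ℕ) := by rw [hbv]; split <;> omega
      exact fun h => this (by rw [h])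
    have hiff : ∀ a : Fin n, (cpos n a j < cpos n a b ↔ a = j) := by
      intro a
      have halt := a.isLt
      have hblt := b.isLt
      unfold cpos
      rw [cposmod n a j halt hjlt, cposmod n a b halt hblt, Fin.ext_iff]
      split_ifs at hbv ⊢ <;> omega
    constructor
    · intro h
      have h1 := h b hbj
      have heq : (univ.filter fun i => cpos n (v i) j < cpos n (v i) b)
          = univ.filter (fun i => v i = j) := by
        ext i; simp [hiff (v i)]
      rwa [heq] at h1
    · intro h b' hb'
      refine h.trans (card_le_card ?_)
      intro i hi
      simp only [mem_filter, mem_univ, true_and] at hi ⊢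
      rw [hi]
      unfold cpos
      rw [cposmod n j j hjlt hjlt, cposmod n j b' hjlt b'.isLt]
      have hne : (b':ℕ) ≠ (j:ℕ) := fun hh => hb' (Fin.ext hh)
      have := b'.isLt
      split_ifs <;> omega

lemma count_fiber (n V : ℕ) (j : Fin n) (s : Finset (Fin V)) :
    (univ.filter fun v : Fin V → Fin n => (univ.filter fun i => v i = j) = s).card
      = (n-1)^(V - s.card) := by
  classical
  have hset : (univ.filter fun v : Fin V → Fin n => (univ.filter fun i => v i = j) = s)
      = Fintype.piFinset (fun i => if i ∈ s then ({j} : Finset (Fin n))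
          else univ.filter (· ≠ j)) := by
    ext v
    simp only [mem_filter, mem_univ, true_and, Fintype.mem_piFinset, Finset.ext_iff]
    refine forall_congr' fun i => ?_
    by_cases h : i ∈ s <;> simp [h]
  rw [hset, Fintype.card_piFinset]
  have hcard : ∀ i : Fin V,
      ((if i ∈ s then ({j} : Finset (Fin n)) else univ.filter (· ≠ j)).card)
        = if i ∈ s then 1 else n - 1 := by
    intro i
    split
    · simp
    · rw [filter_ne', card_erase_of_mem (mem_univ j), card_univ, Fintype.card_fin]
  simp only [hcard]
  rw [Finset.prod_ite, prod_const_one, one_mul, prod_const]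
  congr 1
  have : (univ.filter (fun i : Fin V => i ∉ s)) = sᶜ := by ext i; simp
  rw [this, card_compl, Fintype.card_fin]

lemma count_Ej (n k : ℕ) (hk : 1 ≤ k) (j : Fin n) :
    (univ.filter fun v : Fin (2*k-1) → Fin n =>
        k ≤ (univ.filter fun i => v i = j).card).card
      = ∑ m ∈ range (2*k),
          if k ≤ m then Nat.choose (2*k-1) m * (n-1)^(2*k-1-m) else 0 := by
  classical
  rw [card_eq_sum_card_fiberwise
    (f := fun v : Fin (2*k-1) → Fin n => univ.filter fun i => v i = j)
    (t := (univ : Finset (Fin (2*k-1))).powerset.filter fun s => k ≤ s.card)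
    (by intro v hv
        simp only [mem_coe, mem_filter, mem_univ, true_and] at hv
        simp only [mem_coe, mem_filter, mem_powerset]
        exact ⟨subset_univ _, hv⟩)]
  have hfib : ∀ s ∈ (univ : Finset (Fin (2*k-1))).powerset.filter fun s => k ≤ s.card,
      ((univ.filter fun v : Fin (2*k-1) → Fin n =>
          k ≤ (univ.filter fun i => v i = j).card).filter
        (fun v => (univ.filter fun i => v i = j) = s)).card
      = (n-1)^(2*k-1 - s.card) := by
    intro s hs
    have hks : k ≤ s.card := (mem_filter.mp hs).2
    rw [← count_fiber n (2*k-1) j s]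
    congr 1
    ext v
    simp only [mem_filter, mem_univ, true_and]
    constructor
    · rintro ⟨-, h⟩; exact h
    · intro h; exact ⟨by rw [h]; exact hks, h⟩
  rw [sum_congr rfl hfib, sum_filter, sum_powerset]
  have huniv : (univ : Finset (Fin (2*k-1))).card = 2*k-1 := by
    rw [card_univ, Fintype.card_fin]
  rw [huniv]
  have hrange : 2*k-1+1 = 2*k := by omega
  rw [hrange]
  refine sum_congr rfl fun m hm => ?_
  have hsp := Finset.sum_powersetCard m (univ : Finset (Fin (2*k-1)))
      (fun c => if k ≤ c then (n-1)^(2*k-1 - c) else 0)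
  simp only [huniv, smul_eq_mul] at hsp
  rw [hsp]
  by_cases h : k ≤ m
  · simp [h]
  · simp [h]

lemma reindex (n k : ℕ) (hk : 1 ≤ k) :
    (∑ m ∈ range (2*k), if k ≤ m then Nat.choose (2*k-1) m * (n-1)^(2*k-1-m) else 0)
      = ∑ ℓ ∈ range k, Nat.choose (2*k-1) ℓ * (n-1)^ℓ := by
  rw [← sum_filter]
  refine sum_nbij' (fun m => 2*k-1-m) (fun ℓ => 2*k-1-ℓ) ?_ ?_ ?_ ?_ ?_
  · intro m hm; simp only [mem_filter, mem_range] at *; omega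
  · intro ℓ hl; simp only [mem_filter, mem_range] at *
    constructor
    · omega
    · omega
  · intro m hm; simp only [mem_filter, mem_range] at hm; omega
  · intro ℓ hl; simp only [mem_range] at hl; omega
  · intro m hm
    simp only [mem_filter, mem_range] at hm
    have hm1 : m ≤ 2*k-1 := by omega
    rw [Nat.choose_symm hm1]

lemma card_E (n k : ℕ) (hn : 1 ≤ n) (hk : 1 ≤ k) :
    (univ.filter fun v : Fin (2*k-1) → Fin n =>
        ∃ j, k ≤ (univ.filter fun i => v i = j).card).card
      = n * ∑ ℓ ∈ range k, Nat.choose (2*k-1) ℓ * (n-1)^ℓ := by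
  classical
  have hsplit : (univ.filter fun v : Fin (2*k-1) → Fin n =>
        ∃ j, k ≤ (univ.filter fun i => v i = j).card)
      = univ.biUnion (fun j : Fin n =>
          univ.filter fun v => k ≤ (univ.filter fun i => v i = j).card) := by
    ext v; simp
  rw [hsplit, card_biUnion]
  · rw [sum_congr rfl fun j _ => (count_Ej n k hk j).trans (reindex n k hk),
      sum_const, card_univ, Fintype.card_fin, smul_eq_mul]
  · intro j1 _ j2 _ hne
    rw [Function.onFun, disjoint_left]
    intro v h1 h2
    simp only [mem_filter, mem_univ, true_and] at h1 h2
    have hd : Disjoint (univ.filter fun i => v i = j1) (univ.filter fun i => v i = j2) := by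
      rw [disjoint_left]
      intro i a b
      simp only [mem_filter, mem_univ, true_and] at a b
      exact hne (a ▸ b ▸ rfl)
    have hcu := card_union_of_disjoint hd
    have hle := card_le_card (subset_univ
      ((univ.filter fun i => v i = j1) ∪ (univ.filter fun i => v i = j2)))
    rw [card_univ, Fintype.card_fin] at hle
    omega

open Classical in
/-- Under the distribution `π*` assigning probability `1/n` to each of the `n` cyclic
rankings, the probability of a Condorcet winner equals
`n^{-(2k-2)} ∑_{ℓ=0}^{k-1} C(2k-1,ℓ)(n-1)^ℓ`. -/
theorem condorcet_prob_cyclic (n k : ℕ) (hn : 1 ≤ n) (hk : 1 ≤ k) :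
    (∑ v : Fin (2*k-1) → Fin n,
        (if ∃ j : Fin n, CondorcetWinnerCyc n k v j then ((n : ℝ) ^ (2*k-1))⁻¹ else 0))
      = ((n : ℝ) ^ (2*k-2))⁻¹ * ∑ ℓ ∈ range k, (Nat.choose (2*k-1) ℓ : ℝ) * ((n:ℝ)-1)^ℓ := by
  classical
  have hrw : ∀ v : Fin (2*k-1) → Fin n,
      (if ∃ j : Fin n, CondorcetWinnerCyc n k v j then ((n : ℝ) ^ (2*k-1))⁻¹ else 0)
      = (if ∃ j : Fin n, k ≤ (univ.filter fun i => v i = j).card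
          then ((n : ℝ) ^ (2*k-1))⁻¹ else 0) := fun v =>
    if_congr (exists_congr fun j => condorcet_iff n k hn v j) rfl rfl
  rw [Finset.sum_congr rfl fun v _ => hrw v, Finset.sum_ite, Finset.sum_const_zero,
    add_zero, Finset.sum_const, nsmul_eq_mul, card_E n k hn hk]
  have hX : ((∑ ℓ ∈ range k, Nat.choose (2*k-1) ℓ * (n-1)^ℓ : ℕ) : ℝ)
      = ∑ ℓ ∈ range k, (Nat.choose (2*k-1) ℓ : ℝ) * ((n:ℝ)-1)^ℓ := by
    push_cast [Nat.cast_sub hn]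
    ring
  rw [Nat.cast_mul, hX]
  have hne : (n:ℝ) ≠ 0 := by positivity
  have hpow : (n:ℝ)^(2*k-1) = (n:ℝ)^(2*k-2) * n := by
    rw [← pow_succ]
    congr 1
    omega
  rw [hpow, mul_inv]
  field_simp
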